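/- Let H be a complex Hilbert space and let P be a nonzero closed subspace of H. Then the principal dual ideal H_P := {U ∈ L(H) | P ⊆ U} equals the intersection of all quasipoints of L(H) that contain P. -/

import Mathlib

/-- The lattice `L(H)` of closed (linear) subspaces of a Hilbert space `H`. -/
def ClosedSubspace (H : Type*) [NormedAddCommGroup H] [InnerProductSpace ℂ H] : Type _ :=
  {U : Submodule ℂ H // IsClosed (U : Set H)}

/-- The zero subspace, as an element of `L(H)`. -/
def zeroCS (H : Type*) [NormedAddCommGroup H] [InnerProductSpace ℂ H] :
    ClosedSubspace H :=
  ⟨⊥, by rw [Submodule.bot_coe]; exact isClosed_singleton⟩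

/-- A quasipoint of `L(H)`: a nonempty set of closed subspaces not containing
the zero subspace, downward directed (for `U, V ∈ B` there is `W ∈ B` with
`W ⊆ U ∩ V`), and maximal among subsets with these properties. -/
def IsQuasipointCS {H : Type*} [NormedAddCommGroup H] [InnerProductSpace ℂ H]
    (B : Set (ClosedSubspace H)) : Prop :=
  B.Nonempty ∧ zeroCS H ∉ B ∧
  (∀ U ∈ B, ∀ V ∈ B, ∃ W ∈ B, W.1 ≤ U.1 ⊓ V.1) ∧
  ∀ C : Set (ClosedSubspace H), zeroCS H ∉ C →
    (∀ U ∈ C, ∀ V ∈ C, ∃ W ∈ C, W.1 ≤ U.1 ⊓ V.1) → B ⊆ C → B = C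

/-- The set of closed subspaces containing a fixed nonzero vector `x` is a
quasipoint. -/
lemma isQuasipoint_atom {H : Type*} [NormedAddCommGroup H] [InnerProductSpace ℂ H]
    [CompleteSpace H] (x : H) (hx : x ≠ 0) :
    IsQuasipointCS {V : ClosedSubspace H | x ∈ V.1} := by
  refine ⟨⟨⟨⊤, by rw [Submodule.top_coe]; exact isClosed_univ⟩, trivial⟩, ?_, ?_, ?_⟩
  · intro h
    exact hx (Submodule.mem_bot ℂ |>.mp h)
  · intro U hU V hV
    exact ⟨⟨U.1 ⊓ V.1, by rw [Submodule.coe_inf]; exact U.2.inter V.2⟩,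
      ⟨hU, hV⟩, le_rfl⟩
  · intro C hC0 hCdir hBC
    ext W
    constructor
    · exact fun h => hBC h
    · intro hWC
      have hspan : IsClosed ((Submodule.span ℂ {x} : Submodule ℂ H) : Set H) :=
        Submodule.closed_of_finiteDimensional _
      set S : ClosedSubspace H := ⟨Submodule.span ℂ {x}, hspan⟩ with hS
      have hSB : S ∈ {V : ClosedSubspace H | x ∈ V.1} :=
        Submodule.mem_span_singleton_self x
      obtain ⟨W', hW'C, hle⟩ := hCdir S (hBC hSB) W hWC
      have hW'0 : W' ≠ zeroCS H := fun h => hC0 (h ▸ hW'C)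
      have hW'bot : W'.1 ≠ ⊥ := fun h => hW'0 (Subtype.ext h)
      obtain ⟨y, hyW', hy0⟩ := Submodule.ne_bot_iff _ |>.mp hW'bot
      have hyS : y ∈ Submodule.span ℂ ({x} : Set H) := (hle hyW').1
      obtain ⟨c, hc⟩ := Submodule.mem_span_singleton.mp hyS
      have hc0 : c ≠ 0 := by
        rintro rfl
        rw [zero_smul] at hc
        exact hy0 hc.symm
      have hxW' : x ∈ W'.1 := by
        have : (c⁻¹ : ℂ) • y ∈ W'.1 := W'.1.smul_mem _ hyW'
        rwa [← hc, smul_smul, inv_mul_cancel₀ hc0, one_smul] at this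
      exact (hle hxW').2

/-- For a nonzero closed subspace `P` of `H`, the principal dual ideal
`H_P = {U ∈ L(H) | P ⊆ U}` equals the intersection of all quasipoints of
`L(H)` containing `P`. -/
theorem stmt6 {H : Type*} [NormedAddCommGroup H] [InnerProductSpace ℂ H]
    [CompleteSpace H] (P : ClosedSubspace H) (hP : P.1 ≠ ⊥) :
    {U : ClosedSubspace H | P.1 ≤ U.1} =
      ⋂₀ {B : Set (ClosedSubspace H) | IsQuasipointCS B ∧ P ∈ B} := by
  ext U
  simp only [Set.mem_setOf_eq, Set.mem_sInter]
  constructor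
  · rintro hPU B ⟨⟨hne, h0, hdir, hmax⟩, hPB⟩
    have hUne : U ≠ zeroCS H := by
      intro h
      apply hP
      have hU : U.1 = ⊥ := congrArg Subtype.val h
      exact le_bot_iff.mp (hU ▸ hPU)
    have key := hmax (insert U B) ?_ ?_ (Set.subset_insert _ _)
    · rw [key]; exact Set.mem_insert _ _
    · intro h
      rcases Set.mem_insert_iff.mp h with h | h
      · exact hUne h.symm
      · exact h0 h
    · intro V1 h1 V2 h2
      rcases Set.mem_insert_iff.mp h1 with e1 | m1
      all_goals rcases Set.mem_insert_iff.mp h2 with e2 | m2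
      · subst e1; subst e2
        obtain ⟨W, hW, hle⟩ := hdir P hPB P hPB
        exact ⟨W, Set.mem_insert_of_mem _ hW,
          le_inf ((hle.trans inf_le_left).trans hPU)
            ((hle.trans inf_le_right).trans hPU)⟩
      · subst e1
        obtain ⟨W, hW, hle⟩ := hdir P hPB V2 m2
        exact ⟨W, Set.mem_insert_of_mem _ hW,
          le_inf ((hle.trans inf_le_left).trans hPU) (hle.trans inf_le_right)⟩
      · subst e2
        obtain ⟨W, hW, hle⟩ := hdir V1 m1 P hPB
        exact ⟨W, Set.mem_insert_of_mem _ hW,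
          le_inf (hle.trans inf_le_left) ((hle.trans inf_le_right).trans hPU)⟩
      · obtain ⟨W, hW, hle⟩ := hdir V1 m1 V2 m2
        exact ⟨W, Set.mem_insert_of_mem _ hW, hle⟩
  · intro hall
    by_contra hnle
    obtain ⟨x, hxP, hxU⟩ := SetLike.not_le_iff_exists.mp hnle
    have hx0 : x ≠ 0 := fun h => hxU (h ▸ U.1.zero_mem)
    exact hxU (hall {V : ClosedSubspace H | x ∈ V.1}
      ⟨isQuasipoint_atom x hx0, hxP⟩)
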